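/- Let k be a perfect field of characteristic p > 0. Every finite subgroup of the group of k-algebra automorphisms of k[[t]] is cyclic mod p, i.e., it has a normal Sylow p-subgroup with cyclic quotient. -/

import Mathlib

open PowerSeries


section Aux
variable {k : Type*} [Field k]

private lemma autPS_constCoeff (σ : PowerSeries k ≃ₐ[k] PowerSeries k) :
    constantCoeff (σ X) = 0 := by
  by_contra h
  have hu : IsUnit (σ X) := isUnit_iff_constantCoeff.mpr (isUnit_iff_ne_zero.mpr h)
  have hX : IsUnit (X : PowerSeries k) := by
    have := hu.map σ.symm
    simpa using this
  have := isUnit_iff_constantCoeff.mp hX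
  simp at this

private lemma autPS_X_dvd (σ : PowerSeries k ≃ₐ[k] PowerSeries k) :
    (X : PowerSeries k) ∣ σ X := X_dvd_iff.mpr (autPS_constCoeff σ)

private lemma autPS_C (σ : PowerSeries k ≃ₐ[k] PowerSeries k) (a : k) :
    σ (C a) = C a := by
  have := σ.commutes a
  simpa [PowerSeries.algebraMap_apply] using this

/-- the coefficient of `t` in `σ(t)` -/
private noncomputable def dcoeff (σ : PowerSeries k ≃ₐ[k] PowerSeries k) : k := coeff 1 (σ X)

private lemma dcoeff_one : dcoeff (1 : PowerSeries k ≃ₐ[k] PowerSeries k) = 1 := by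
  simp [dcoeff]

private lemma autPS_decomp (σ : PowerSeries k ≃ₐ[k] PowerSeries k) :
    ∃ g, σ X = C (dcoeff σ) * X + X ^ 2 * g := by
  have h : (X : PowerSeries k) ^ 2 ∣ σ X - C (dcoeff σ) * X := by
    rw [X_pow_dvd_iff]
    intro m hm
    interval_cases m <;>
      simp [dcoeff, coeff_C_mul, autPS_constCoeff σ]
  · obtain ⟨g, hg⟩ := h
    exact ⟨g, by rw [← hg]; ring⟩

private lemma dcoeff_mul (σ τ : PowerSeries k ≃ₐ[k] PowerSeries k) :
    dcoeff (σ * τ) = dcoeff σ * dcoeff τ := by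
  obtain ⟨g, hg⟩ := autPS_decomp τ
  have h1 : (σ * τ) X = C (dcoeff τ) * σ X + (σ X) ^ 2 * σ g := by
    rw [AlgEquiv.mul_apply, hg, map_add, map_mul, map_mul, map_pow, autPS_C]
  have h2 : coeff 1 ((σ X) ^ 2 * σ g) = 0 := by
    have hdvd : (X : PowerSeries k) ^ 2 ∣ (σ X) ^ 2 * σ g :=
      Dvd.dvd.mul_right (pow_dvd_pow_of_dvd (autPS_X_dvd σ) 2) _
    exact X_pow_dvd_iff.mp hdvd 1 one_lt_two
  rw [dcoeff, h1, map_add, h2, add_zero, coeff_C_mul]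
  rw [mul_comm]
  rfl

/-- The "leading-coefficient" homomorphism `Aut(k[[t]]) →* kˣ`. -/
private noncomputable def Fhom : (PowerSeries k ≃ₐ[k] PowerSeries k) →* kˣ where
  toFun σ := ⟨dcoeff σ, dcoeff σ⁻¹,
    by rw [← dcoeff_mul, mul_inv_cancel, dcoeff_one],
    by rw [← dcoeff_mul, inv_mul_cancel, dcoeff_one]⟩
  map_one' := Units.ext dcoeff_one
  map_mul' σ τ := Units.ext (dcoeff_mul σ τ)

private lemma Fhom_val (σ : PowerSeries k ≃ₐ[k] PowerSeries k) :
    ((Fhom σ : kˣ) : k) = dcoeff σ := rfl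

end Aux

section Aux2
variable {k : Type*} [Field k]


/-- Lemma A: if σ(t) ≡ t mod t^s then σ(f) ≡ f mod t^s for all f. -/
private lemma lemA (σ : PowerSeries k ≃ₐ[k] PowerSeries k) :
    ∀ s : ℕ, (X : PowerSeries k) ^ s ∣ σ X - X → ∀ f, (X : PowerSeries k) ^ s ∣ σ f - f := by
  intro s
  induction s with
  | zero => intro _ f; simpa using one_dvd _
  | succ s ih =>
    intro hs f
    have hs' : (X : PowerSeries k) ^ s ∣ σ X - X :=
      dvd_trans (pow_dvd_pow X (Nat.le_succ s)) hs
    have h0 : (X : PowerSeries k) ∣ f - C (constantCoeff f) := by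
      rw [X_dvd_iff]; simp
    obtain ⟨g, hg⟩ := h0
    have hf : f = C (constantCoeff f) + X * g := by rw [← hg]; ring
    have key : σ f - f = (σ X - X) * σ g + X * (σ g - g) := by
      rw [hf, map_add, map_mul, autPS_C]; ring
    rw [key]
    exact dvd_add (Dvd.dvd.mul_right hs _)
      (by rw [pow_succ, mul_comm ((X:PowerSeries k)^s)]
          exact mul_dvd_mul_left X (ih hs' g))

/-- Lemma B: if σ(t) ≡ t mod t^s and t^m ∣ f then σ(f) ≡ f mod t^(m-1+s). -/
private lemma lemB (σ : PowerSeries k ≃ₐ[k] PowerSeries k) (s m : ℕ)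
    (hs : (X : PowerSeries k) ^ s ∣ σ X - X) (f : PowerSeries k)
    (hf : (X : PowerSeries k) ^ m ∣ f) :
    (X : PowerSeries k) ^ (m - 1 + s) ∣ σ f - f := by
  obtain ⟨g, hg⟩ := hf
  have key : σ f - f = ((σ X) ^ m - X ^ m) * σ g + X ^ m * (σ g - g) := by
    rw [hg, map_mul, map_pow]; ring
  rw [key]
  apply dvd_add
  · have hgeo : (σ X) ^ m - X ^ m
        = (∑ i ∈ Finset.range m, (σ X) ^ i * X ^ (m - 1 - i)) * (σ X - X) :=
      (geom_sum₂_mul (σ X) X m).symm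
    have hsum : (X : PowerSeries k) ^ (m - 1) ∣
        ∑ i ∈ Finset.range m, (σ X) ^ i * X ^ (m - 1 - i) := by
      apply Finset.dvd_sum
      intro i hi
      have hi' : i ≤ m - 1 := Nat.le_sub_one_of_lt (Finset.mem_range.mp hi)
      calc (X : PowerSeries k) ^ (m - 1) = X ^ i * X ^ (m - 1 - i) := by
            rw [← pow_add, Nat.add_sub_cancel' hi']
        _ ∣ (σ X) ^ i * X ^ (m - 1 - i) :=
            mul_dvd_mul (pow_dvd_pow_of_dvd (autPS_X_dvd σ) i) dvd_rfl
    have h2 := mul_dvd_mul hsum hs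
    rw [geom_sum₂_mul] at h2
    exact Dvd.dvd.mul_right (by simpa [pow_add] using h2) _
  · have : (X : PowerSeries k) ^ s ∣ σ g - g := lemA σ s hs g
    calc (X : PowerSeries k) ^ (m - 1 + s) ∣ X ^ (m + s) :=
          pow_dvd_pow X (by omega)
      _ ∣ X ^ m * (σ g - g) := by rw [pow_add]; exact mul_dvd_mul_left _ this

/-- If σ fixes t then σ = 1. -/
private lemma autPS_eq_one (σ : PowerSeries k ≃ₐ[k] PowerSeries k) (h : σ X = X) :
    σ = 1 := by
  apply AlgEquiv.ext
  intro f
  have : ∀ m : ℕ, coeff m (σ f - f) = 0 := by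
    intro m
    have hdvd : (X : PowerSeries k) ^ (m + 1) ∣ σ X - X := by
      rw [h, sub_self]; exact dvd_zero _
    exact X_pow_dvd_iff.mp (lemA σ (m + 1) hdvd f) m (Nat.lt_succ_self m)
  have : σ f - f = 0 := PowerSeries.ext fun m => by simpa using this m
  simpa [sub_eq_zero] using this



end Aux2

section Aux3
variable {k : Type*} [Field k]


/-- Torsion elements of the Nottingham group: if `σ(t) = t + O(t²)` and `σ^ℓ = 1`
with `ℓ` invertible in `k`, then `σ = 1`. -/
private lemma autPS_torsion (σ : PowerSeries k ≃ₐ[k] PowerSeries k)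
    (hd : coeff 1 (σ X) = 1) (ℓ : ℕ) (hℓ : (ℓ : k) ≠ 0) (hord : σ ^ ℓ = 1) :
    σ = 1 := by
  classical
  by_contra hσ
  have hXne : σ X ≠ X := fun h => hσ (autPS_eq_one σ h)
  obtain ⟨h, hh⟩ : ∃ h, h = σ X - X := ⟨_, rfl⟩
  have hne : h ≠ 0 := by rw [hh]; exact sub_ne_zero.mpr hXne
  have hex : ∃ n, coeff n h ≠ 0 := by
    by_contra hc; push_neg at hc
    exact hne (PowerSeries.ext fun n => by simpa using hc n)
  let n := Nat.find hex
  have ha : coeff n h ≠ 0 := Nat.find_spec hex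
  have hmin : ∀ m < n, coeff m h = 0 := fun m hm => by
    have := Nat.find_min hex hm; simpa using this
  have h0 : coeff 0 h = 0 := by
    simp [hh, coeff_zero_eq_constantCoeff, autPS_constCoeff]
  have h1 : coeff 1 h = 0 := by simp [hh, hd]
  have hn2 : 2 ≤ n := by
    by_contra hlt; push_neg at hlt
    interval_cases n
    · exact ha h0
    · exact ha h1
  have hdvd : (X : PowerSeries k) ^ n ∣ h := X_pow_dvd_iff.mpr hmin
  have main : ∀ j : ℕ, (X : PowerSeries k) ^ (n + 1) ∣ (σ ^ j) X - X - j • h := by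
    intro j
    induction j with
    | zero => simp
    | succ j ih =>
      have hpow : (σ ^ (j + 1)) X = σ ((σ ^ j) X) := by
        rw [pow_succ']; exact AlgEquiv.mul_apply _ _ _
      obtain ⟨r, hr⟩ : ∃ r, r = (σ ^ j) X - X - j • h := ⟨_, rfl⟩
      rw [← hr] at ih
      have hjX : (σ ^ j) X = X + j • h + r := by rw [hr]; abel
      have hdvd' : (X : PowerSeries k) ^ n ∣ σ X - X := by rw [← hh]; exact hdvd
      have hσh : (X : PowerSeries k) ^ (n + 1) ∣ σ h - h :=
        dvd_trans (pow_dvd_pow X (by omega)) (lemB σ n n hdvd' h hdvd)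
      have hσr : (X : PowerSeries k) ^ (n + 1) ∣ σ r - r :=
        dvd_trans (pow_dvd_pow X (by omega)) (lemB σ n (n + 1) hdvd' r ih)
      have hσX : σ X = X + h := by rw [hh]; ring
      have hexp : (σ ^ (j + 1)) X - X - (j + 1) • h
          = j • (σ h - h) + (σ r - r) + r := by
        rw [hpow, hjX, map_add, map_add, map_nsmul, hσX, succ_nsmul, smul_sub]
        abel
      rw [hexp]
      refine dvd_add (dvd_add ?_ hσr) ih
      rw [nsmul_eq_mul]
      exact Dvd.dvd.mul_left hσh _
  have hfin := main ℓ
  rw [hord, AlgEquiv.one_apply, sub_self, zero_sub] at hfin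
  have hc : coeff n (ℓ • h) = 0 :=
    X_pow_dvd_iff.mp (dvd_neg.mp hfin) n (Nat.lt_succ_self n)
  rw [map_nsmul, nsmul_eq_mul] at hc
  rcases mul_eq_zero.mp hc with h' | h'
  · exact hℓ h'
  · exact ha h'



end Aux3




/-- Let `k` be a perfect field of characteristic `p > 0`.  Every finite
subgroup `G` of the group of `k`-algebra automorphisms of `k[[t]]` is cyclic mod `p`:
it has a normal Sylow `p`-subgroup (a normal `p`-subgroup of index prime to `p`)
whose quotient is cyclic. -/
theorem finite_subgroup_aut_powerSeries_cyclic_mod_p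
    (k : Type*) [Field k] (p : ℕ) [Fact p.Prime] [CharP k p] [PerfectField k]
    (G : Subgroup (PowerSeries k ≃ₐ[k] PowerSeries k)) [Finite G] :
    ∃ (P : Subgroup G) (h : P.Normal), IsPGroup p P ∧ ¬ p ∣ P.index ∧
      (letI := h; IsCyclic (G ⧸ P)) := by
  classical
  set Fg : G →* kˣ := Fhom.comp G.subtype with hFg
  haveI : Finite (G ⧸ Fg.ker) := Quotient.finite _
  haveI := Fintype.ofFinite (G ⧸ Fg.ker)
  let e := QuotientGroup.quotientKerEquivRange Fg
  refine ⟨Fg.ker, Fg.normal_ker, ?_, ?_, ?_⟩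
  · -- the kernel is a p-group
    rw [IsPGroup.iff_orderOf]
    intro g
    let ι : Fg.ker →* (PowerSeries k ≃ₐ[k] PowerSeries k) :=
      G.subtype.comp Fg.ker.subtype
    have hι : Function.Injective ι :=
      G.subtype_injective.comp Fg.ker.subtype_injective
    set σ := ι g with hσ
    have hσord : orderOf σ = orderOf g := orderOf_injective ι hι g
    have hm : orderOf σ ≠ 0 := by rw [hσord]; exact (orderOf_pos g).ne'
    have hFσ : Fhom σ = 1 := g.2
    have key : ∀ q : ℕ, q.Prime → q ∣ orderOf σ → q = p := by
      intro q hq hqd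
      by_contra hqp
      set τ := σ ^ (orderOf σ / q) with hτ
      have hτord : orderOf τ = q := orderOf_pow_orderOf_div hm hqd
      have hτq : τ ^ q = 1 := by rw [← hτord]; exact pow_orderOf_eq_one τ
      have hFτ : Fhom τ = 1 := by rw [hτ, map_pow, hFσ, one_pow]
      have hdτ : coeff 1 (τ X) = 1 := by
        have h2 := Fhom_val τ
        rw [hFτ, Units.val_one] at h2
        simpa [dcoeff] using h2.symm
      have hqk : ((q : ℕ) : k) ≠ 0 := by
        intro h0
        have := (CharP.cast_eq_zero_iff k p q).mp h0
        exact hqp ((Nat.prime_dvd_prime_iff_eq Fact.out hq).mp this).symm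
      have := autPS_torsion τ hdτ q hqk hτq
      rw [this, orderOf_one] at hτord
      exact hq.one_lt.ne hτord
    have := Nat.eq_prime_pow_of_unique_prime_dvd (n := orderOf σ) (p := p) hm
      (fun {d} hd hdd => key d hd hdd)
    exact ⟨_, by rw [← hσord]; exact this⟩
  · -- index prime to p
    intro hdvd
    have hdvd' : p ∣ Fintype.card (G ⧸ Fg.ker) := by
      rwa [← Nat.card_eq_fintype_card]
    obtain ⟨x, hx⟩ := exists_prime_orderOf_dvd_card p hdvd'
    have hx' : orderOf (e x) = p :=
      (orderOf_injective e.toMonoidHom e.injective x).trans hx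
    set u : kˣ := ((e x : Fg.range) : kˣ) with hu
    have hu_ord : orderOf u = p :=
      (orderOf_injective Fg.range.subtype Fg.range.subtype_injective (e x)).trans hx'
    have hup : u ^ p = 1 := by rw [← hu_ord]; exact pow_orderOf_eq_one u
    have hune : u ≠ 1 := by
      intro h1
      rw [h1, orderOf_one] at hu_ord
      exact (Fact.out : p.Prime).one_lt.ne hu_ord
    have hsub : ((u : k) - 1) ^ p = 0 := by
      rw [sub_pow_char, one_pow, ← Units.val_pow_eq_pow_val, hup, Units.val_one,
        sub_self]
    have : (u : k) = 1 := by
      have := pow_eq_zero_iff (Fact.out : p.Prime).ne_zero |>.mp hsub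
      exact sub_eq_zero.mp this
    exact hune (Units.ext this)
  · -- cyclic quotient
    haveI : Finite Fg.range := Finite.of_equiv _ e.toEquiv
    haveI := subgroup_units_cyclic Fg.range
    exact isCyclic_of_surjective e.symm.toMonoidHom e.symm.surjective
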